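/- arXiv:2104.12082 — 2 statements merged into one kernel-verified Lean document; each statement's English description precedes it below -/
import Mathlib

section
/- Let G be an orderenergetic graph of order p. Then the 2-splitting graph spl₂(G) is orderenergetic, i.e., spl₂(G) has 3p vertices and ε(spl₂(G)) = 3p. -/
open Matrix SimpleGraph Finset

variable {V W : Type*}

/-- The adjacency matrix of a simple graph over ℝ is Hermitian. -/
lemma adjMatrix_isHermitian [Fintype V] [DecidableEq V] (G : SimpleGraph V)
    [DecidableRel G.Adj] : (G.adjMatrix ℝ).IsHermitian := by
  rw [Matrix.IsHermitian, Matrix.conjTranspose_eq_transpose_of_trivial]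
  exact G.isSymm_adjMatrix

/-- The energy of a finite simple graph: the sum of the absolute values of the
eigenvalues of its real adjacency matrix. -/
noncomputable def graphEnergy [Fintype V] [DecidableEq V] (G : SimpleGraph V) : ℝ := by
  classical
  exact ∑ i, |(adjMatrix_isHermitian G).eigenvalues i|

/-- The spectrum of a finite simple graph: the multiset of eigenvalues (with
multiplicity) of its real adjacency matrix. -/
noncomputable def graphSpectrum [Fintype V] [DecidableEq V] (G : SimpleGraph V) : Multiset ℝ := by
  classical
  exact Finset.univ.val.map (adjMatrix_isHermitian G).eigenvalues

/-- A graph is integral if every eigenvalue of its adjacency matrix is an integer. -/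
def IsIntegralGraph [Fintype V] [DecidableEq V] (G : SimpleGraph V) : Prop :=
  ∀ x ∈ graphSpectrum G, ∃ k : ℤ, x = (k : ℝ)

/-- The m-shadow graph of `G`, on vertex set `Fin m × V`: `(i,u)` and `(j,v)` are
adjacent iff `u` and `v` are adjacent in `G`. -/
def shadowGraph (m : ℕ) (G : SimpleGraph V) : SimpleGraph (Fin m × V) where
  Adj x y := G.Adj x.2 y.2
  symm := ⟨fun _ _ h => h.symm⟩
  loopless := ⟨fun _ h => G.loopless.irrefl _ h⟩

/-- The duplicate graph of `G`, on vertex set `V ⊕ V`: `inl a` is adjacent to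
`inr b` iff `a` and `b` are adjacent in `G`; no other adjacencies. -/
def duplicateGraph (G : SimpleGraph V) : SimpleGraph (V ⊕ V) where
  Adj x y :=
    match x, y with
    | Sum.inl a, Sum.inr b => G.Adj a b
    | Sum.inr a, Sum.inl b => G.Adj a b
    | _, _ => False
  symm := ⟨by rintro (a | a) (b | b) h <;> first | exact h.symm | exact h.elim⟩
  loopless := ⟨by rintro (a | a) h <;> exact h⟩

/-- The Kronecker (tensor) product of two simple graphs. -/
def tensorGraph (G : SimpleGraph V) (H : SimpleGraph W) : SimpleGraph (V × W) where
  Adj x y := G.Adj x.1 y.1 ∧ H.Adj x.2 y.2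
  symm := ⟨fun _ _ h => ⟨h.1.symm, h.2.symm⟩⟩
  loopless := ⟨fun _ h => G.loopless.irrefl _ h.1⟩

/-- The m-splitting graph of `G`, on vertex set `V ⊕ (Fin m × V)`: original
vertices keep their adjacencies, an original vertex `u` is adjacent to a copy
`(i,v)` iff `u` is adjacent to `v` in `G`, and copies are pairwise non-adjacent. -/
def splittingGraph (m : ℕ) (G : SimpleGraph V) : SimpleGraph (V ⊕ (Fin m × V)) where
  Adj x y :=
    match x, y with
    | Sum.inl u, Sum.inl v => G.Adj u v
    | Sum.inl u, Sum.inr iv => G.Adj u iv.2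
    | Sum.inr iu, Sum.inl v => G.Adj iu.2 v
    | Sum.inr _, Sum.inr _ => False
  symm := ⟨by rintro (u | iu) (v | iv) h <;> first | exact h.symm | exact h.elim⟩
  loopless := ⟨by rintro (u | iu) h <;> first | exact G.loopless.irrefl _ h | exact h⟩

/-- The join of two simple graphs: their disjoint union together with all edges
between the two parts. -/
def joinGraph (G : SimpleGraph V) (H : SimpleGraph W) : SimpleGraph (V ⊕ W) where
  Adj x y :=
    match x, y with
    | Sum.inl a, Sum.inl b => G.Adj a b
    | Sum.inr a, Sum.inr b => H.Adj a b
    | _, _ => True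
  symm := ⟨by rintro (a | a) (b | b) h <;> first | exact h.symm | trivial⟩
  loopless := ⟨by rintro (a | a) h <;> first | exact G.loopless.irrefl _ h | exact H.loopless.irrefl _ h⟩

/-- The superpath graph on a sequence of part sizes: independent sets `W i` of
size `a i`, where vertices in parts `i` and `j` are adjacent iff `|i - j| = 1`. -/
def superpathGraph {t : ℕ} (a : Fin t → ℕ) : SimpleGraph (Σ i : Fin t, Fin (a i)) where
  Adj x y := (x.1 : ℕ) + 1 = (y.1 : ℕ) ∨ (y.1 : ℕ) + 1 = (x.1 : ℕ)
  symm := ⟨fun _ _ h => h.symm⟩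
  loopless := ⟨fun x h => by omega⟩


open Matrix SimpleGraph Finset Polynomial

section Aux

variable {n : Type*} [Fintype n] [DecidableEq n]

lemma my_charpoly_conj (P M Q : Matrix n n ℝ) (hPQ : P * Q = 1) :
    (P * M * Q).charpoly = M.charpoly := by
  have h1 : P.map (C : ℝ →+* ℝ[X]) * Q.map (C : ℝ →+* ℝ[X]) = 1 := by
    rw [← Matrix.map_mul, hPQ, Matrix.map_one _ (map_zero C) (map_one C)]
  have hcomm : ∀ N : Matrix n n ℝ[X],
      N * Matrix.scalar n (X : ℝ[X]) = Matrix.scalar n (X : ℝ[X]) * N := by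
    intro N
    exact (Matrix.scalar_commute (X : ℝ[X]) (fun r => Commute.all _ _) N).symm
  have h2 : Matrix.charmatrix (P * M * Q)
      = P.map (C : ℝ →+* ℝ[X]) * M.charmatrix * Q.map (C : ℝ →+* ℝ[X]) := by
    unfold Matrix.charmatrix
    simp only [RingHom.mapMatrix_apply]
    rw [Matrix.map_mul, Matrix.map_mul, Matrix.mul_sub, Matrix.sub_mul]
    congr 1
    symm
    rw [hcomm, mul_assoc, h1, mul_one]
  unfold Matrix.charpoly
  rw [h2, Matrix.det_mul, Matrix.det_mul, mul_right_comm, ← Matrix.det_mul, h1,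
    Matrix.det_one, one_mul]

lemma my_charpoly_diagonal (d : n → ℝ) :
    (Matrix.diagonal d).charpoly = ∏ i, (X - C (d i)) := by
  have h : (Matrix.diagonal d).charmatrix = Matrix.diagonal fun i => X - C (d i) := by
    ext i j
    rcases eq_or_ne i j with rfl | h
    · simp
    · simp [Matrix.charmatrix_apply_ne _ _ _ h, Matrix.diagonal_apply_ne _ h]
  rw [Matrix.charpoly, h, Matrix.det_diagonal]

lemma herm_charpoly_smul {M : Matrix n n ℝ} (hM : M.IsHermitian) (c : ℝ) :
    (c • M).charpoly = ∏ i, (X - C (c * hM.eigenvalues i)) := by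
  have hU : (hM.eigenvectorUnitary : Matrix n n ℝ) *
      (star (hM.eigenvectorUnitary : Matrix n n ℝ)) = 1 :=
    Matrix.mem_unitaryGroup_iff.mp hM.eigenvectorUnitary.2
  have hs : c • M = (hM.eigenvectorUnitary : Matrix n n ℝ) *
      Matrix.diagonal (fun i => c * hM.eigenvalues i) *
      (star (hM.eigenvectorUnitary : Matrix n n ℝ)) := by
    conv_lhs => rw [hM.spectral_theorem]
    rw [Unitary.conjStarAlgAut_apply]
    rw [mul_assoc, ← Matrix.mul_smul, ← Matrix.smul_mul, ← mul_assoc]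
    congr 2
    ext i j
    rcases eq_or_ne i j with rfl | h
    · simp [RCLike.ofReal_real_eq_id, mul_comm]
    · simp [Matrix.diagonal_apply_ne _ h]
  rw [hs, my_charpoly_conj _ _ _ hU, my_charpoly_diagonal]

lemma herm_charpoly {M : Matrix n n ℝ} (hM : M.IsHermitian) :
    M.charpoly = ∏ i, (X - C (hM.eigenvalues i)) := by
  have := herm_charpoly_smul hM 1
  simpa using this

end Aux

section Main

variable {V : Type*}

def mySplitEquiv (V : Type*) : V ⊕ (Fin 2 × V) ≃ V ⊕ (V ⊕ V) where
  toFun x := match x with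
    | .inl v => .inl v
    | .inr (⟨0, _⟩, v) => .inr (.inl v)
    | .inr (⟨1, _⟩, v) => .inr (.inr v)
  invFun x := match x with
    | .inl v => .inl v
    | .inr (.inl v) => .inr (0, v)
    | .inr (.inr v) => .inr (1, v)
  left_inv := by rintro (v | ⟨i, v⟩); · rfl
                 · fin_cases i <;> rfl
  right_inv := by rintro (v | (v | v)) <;> rfl

theorem my_reindex_eq [Fintype V] [DecidableEq V] (G : SimpleGraph V) [DecidableRel G.Adj]
    [DecidableRel (splittingGraph 2 G).Adj] :
    Matrix.reindex (mySplitEquiv V) (mySplitEquiv V) ((splittingGraph 2 G).adjMatrix ℝ) =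
      Matrix.fromBlocks (G.adjMatrix ℝ)
        (Matrix.fromCols (G.adjMatrix ℝ) (G.adjMatrix ℝ))
        (Matrix.fromRows (G.adjMatrix ℝ) (G.adjMatrix ℝ)) 0 := by
  ext a b
  rcases a with u | (u | u) <;> rcases b with v | (v | v) <;>
    simp only [Matrix.reindex_apply, Matrix.submatrix_apply, SimpleGraph.adjMatrix_apply] <;>
    simp [mySplitEquiv, Matrix.reindex_apply, splittingGraph, SimpleGraph.adjMatrix_apply,
      Matrix.fromBlocks, Matrix.fromCols, Matrix.fromRows, Matrix.fromRows_apply_inl,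
      Matrix.fromRows_apply_inr] <;> congr

end Main

section Blocks
open Matrix
variable {V : Type*} [Fintype V] [DecidableEq V]

section BlockAux
variable {m n₁ n₂ m₁ m₂ : Type*}

@[simp] lemma my_smul_fromCols (c : ℝ) (a : Matrix m n₁ ℝ) (b : Matrix m n₂ ℝ) :
    c • Matrix.fromCols a b = Matrix.fromCols (c • a) (c • b) := by
  ext i (j | j) <;> rfl

@[simp] lemma my_smul_fromRows (c : ℝ) (a : Matrix m₁ n₁ ℝ) (b : Matrix m₂ n₁ ℝ) :
    c • Matrix.fromRows a b = Matrix.fromRows (c • a) (c • b) := by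
  ext (i | i) j <;> rfl

@[simp] lemma my_neg_fromCols (a : Matrix m n₁ ℝ) (b : Matrix m n₂ ℝ) :
    -Matrix.fromCols a b = Matrix.fromCols (-a) (-b) := by
  ext i (j | j) <;> rfl

@[simp] lemma my_neg_fromRows (a : Matrix m₁ n₁ ℝ) (b : Matrix m₂ n₁ ℝ) :
    -Matrix.fromRows a b = Matrix.fromRows (-a) (-b) := by
  ext (i | i) j <;> rfl

@[simp] lemma my_add_fromCols (a c : Matrix m n₁ ℝ) (b d : Matrix m n₂ ℝ) :
    Matrix.fromCols a b + Matrix.fromCols c d = Matrix.fromCols (a + c) (b + d) := by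
  ext i (j | j) <;> rfl

@[simp] lemma my_add_fromRows (a c : Matrix m₁ n₁ ℝ) (b d : Matrix m₂ n₁ ℝ) :
    Matrix.fromRows a b + Matrix.fromRows c d = Matrix.fromRows (a + c) (b + d) := by
  ext (i | i) j <;> rfl

end BlockAux

noncomputable def Pmat (V : Type*) [Fintype V] [DecidableEq V] : Matrix (V ⊕ (V ⊕ V)) (V ⊕ (V ⊕ V)) ℝ :=
  Matrix.fromBlocks ((2:ℝ) • 1) (Matrix.fromCols (1 : Matrix V V ℝ) (0 : Matrix V V ℝ))
    (Matrix.fromRows (1 : Matrix V V ℝ) (1 : Matrix V V ℝ))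
    (Matrix.fromBlocks (-(1 : Matrix V V ℝ)) 1 (-1) (-1))

noncomputable def Qmat (V : Type*) [Fintype V] [DecidableEq V] : Matrix (V ⊕ (V ⊕ V)) (V ⊕ (V ⊕ V)) ℝ :=
  Matrix.fromBlocks ((1/3 : ℝ) • 1)
    (Matrix.fromCols ((1/6:ℝ) • (1 : Matrix V V ℝ)) ((1/6:ℝ) • (1 : Matrix V V ℝ)))
    (Matrix.fromRows ((1/3:ℝ) • (1 : Matrix V V ℝ)) (0 : Matrix V V ℝ))
    (Matrix.fromBlocks ((-1/3:ℝ) • (1 : Matrix V V ℝ)) ((-1/3:ℝ) • (1 : Matrix V V ℝ))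
      ((1/2:ℝ) • (1 : Matrix V V ℝ)) ((-1/2:ℝ) • (1 : Matrix V V ℝ)))

noncomputable def Tmat (A : Matrix V V ℝ) : Matrix (V ⊕ (V ⊕ V)) (V ⊕ (V ⊕ V)) ℝ :=
  Matrix.fromBlocks ((2:ℝ) • A) 0 0
    (Matrix.fromBlocks ((-1:ℝ) • A) 0 0 (0 : Matrix V V ℝ))

noncomputable def Smat (A : Matrix V V ℝ) : Matrix (V ⊕ (V ⊕ V)) (V ⊕ (V ⊕ V)) ℝ :=
  Matrix.fromBlocks A (Matrix.fromCols A A) (Matrix.fromRows A A) 0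

theorem testPQ : Pmat V * Qmat V = 1 := by
  unfold Pmat Qmat
  rw [Matrix.fromBlocks_multiply,
    show (1 : Matrix ((V ⊕ (V ⊕ V))) ((V ⊕ (V ⊕ V))) ℝ) = Matrix.fromBlocks 1 0 0 1 from
      (Matrix.fromBlocks_one).symm]
  simp only [Matrix.fromCols_mul_fromRows, Matrix.fromRows_mul_fromCols,
    Matrix.fromCols_mul_fromBlocks, Matrix.fromBlocks_mul_fromRows,
    Matrix.mul_fromCols, Matrix.fromRows_mul, Matrix.fromBlocks_multiply,
    Matrix.smul_mul, Matrix.mul_smul, smul_smul, Matrix.one_mul, Matrix.mul_one,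
    Matrix.mul_zero, Matrix.zero_mul, Matrix.neg_mul, Matrix.mul_neg,
    my_smul_fromCols, my_smul_fromRows, my_neg_fromCols, my_neg_fromRows,
    my_add_fromCols, my_add_fromRows, smul_zero, add_zero, zero_add, smul_neg, neg_neg,
    Matrix.fromCols_fromRows_eq_fromBlocks, Matrix.fromBlocks_add]
  rw [Matrix.fromBlocks_inj]
  refine ⟨by module, ?_, ?_, ?_⟩
  · rw [show (0 : Matrix V (V ⊕ V) ℝ) = Matrix.fromCols 0 0 from
      (Matrix.fromCols_zero).symm, Matrix.fromCols_ext_iff]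
    exact ⟨by module, by module⟩
  · rw [show (0 : Matrix (V ⊕ V) V ℝ) = Matrix.fromRows 0 0 from
      (Matrix.fromRows_zero).symm, Matrix.fromRows_ext_iff]
    exact ⟨by module, by module⟩
  · rw [show (1 : Matrix (V ⊕ V) (V ⊕ V) ℝ) = Matrix.fromBlocks 1 0 0 1 from
      (Matrix.fromBlocks_one).symm, Matrix.fromBlocks_inj]
    exact ⟨by module, by module, by module, by module⟩

theorem testSP (A : Matrix V V ℝ) : Smat A * Pmat V = Pmat V * Tmat A := by
  unfold Smat Pmat Tmat
  rw [Matrix.fromBlocks_multiply, Matrix.fromBlocks_multiply]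
  simp only [Matrix.fromCols_mul_fromRows, Matrix.fromRows_mul_fromCols,
    Matrix.fromCols_mul_fromBlocks, Matrix.fromBlocks_mul_fromRows,
    Matrix.mul_fromCols, Matrix.fromRows_mul, Matrix.fromBlocks_multiply,
    Matrix.smul_mul, Matrix.mul_smul, smul_smul, Matrix.one_mul, Matrix.mul_one,
    Matrix.mul_zero, Matrix.zero_mul, Matrix.neg_mul, Matrix.mul_neg,
    my_smul_fromCols, my_smul_fromRows, my_neg_fromCols, my_neg_fromRows,
    my_add_fromCols, my_add_fromRows, smul_zero, add_zero, zero_add, smul_neg, neg_neg,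
    Matrix.fromCols_fromRows_eq_fromBlocks, Matrix.fromBlocks_add]
  rw [Matrix.fromBlocks_inj]
  refine ⟨by module, ?_, rfl, ?_⟩
  · rw [Matrix.fromCols_ext_iff]
    exact ⟨by module, by module⟩
  · rw [← Matrix.fromCols_fromRows_eq_fromBlocks, Matrix.fromCols_ext_iff]
    refine ⟨?_, (Matrix.fromRows_zero).symm⟩
    rw [Matrix.fromRows_ext_iff]
    exact ⟨by module, by module⟩

end Blocks

section Final
open Polynomial

lemma my_sum_abs_eq {W : Type*} [Fintype W] (f : W → ℝ) :
    ∑ i, |f i| = ((Finset.univ.val.map f).map (fun x => |x|)).sum := by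
  rw [Multiset.map_map, Finset.sum_eq_multiset_sum]
  rfl

lemma final_key {V : Type*} [Fintype V] [DecidableEq V] (G : SimpleGraph V) [DecidableRel G.Adj]
    [DecidableRel (splittingGraph 2 G).Adj] (p : ℕ)
    (hord : ∑ i, |(adjMatrix_isHermitian G).eigenvalues i| = (p : ℝ)) :
    ∑ i, |(adjMatrix_isHermitian (splittingGraph 2 G)).eigenvalues i| = ((3 * p : ℕ) : ℝ) := by
  have hA : (G.adjMatrix ℝ).IsHermitian := adjMatrix_isHermitian G
  have hchar1 : ((splittingGraph 2 G).adjMatrix ℝ).charpoly =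
      ((Finset.univ.val.map (adjMatrix_isHermitian (splittingGraph 2 G)).eigenvalues).map
        (fun r => X - C r)).prod := by
    rw [herm_charpoly (adjMatrix_isHermitian (splittingGraph 2 G)),
      Finset.prod_eq_multiset_prod, Multiset.map_map]
    rfl
  have hST : ((splittingGraph 2 G).adjMatrix ℝ).charpoly = (Smat (G.adjMatrix ℝ)).charpoly := by
    unfold Smat
    rw [← Matrix.charpoly_reindex (mySplitEquiv V) ((splittingGraph 2 G).adjMatrix ℝ), my_reindex_eq G]
  have hconj : (Smat (G.adjMatrix ℝ)).charpoly = (Tmat (G.adjMatrix ℝ)).charpoly := by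
    have h1 : Smat (G.adjMatrix ℝ) = Pmat V * Tmat (G.adjMatrix ℝ) * Qmat V := by
      calc Smat (G.adjMatrix ℝ) = Smat (G.adjMatrix ℝ) * (Pmat V * Qmat V) := by
            rw [testPQ, mul_one]
        _ = (Smat (G.adjMatrix ℝ) * Pmat V) * Qmat V := by rw [mul_assoc]
        _ = Pmat V * Tmat (G.adjMatrix ℝ) * Qmat V := by rw [testSP]
    rw [h1, my_charpoly_conj _ _ _ testPQ]
  have hchar2 : (Tmat (G.adjMatrix ℝ)).charpoly =
      (((Finset.univ.val.map fun i => 2 * hA.eigenvalues i)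
        + (Finset.univ.val.map fun i => -1 * hA.eigenvalues i)
        + (Finset.univ.val.map fun _ : V => (0:ℝ))).map (fun r => X - C r)).prod := by
    unfold Tmat
    rw [Matrix.charpoly_fromBlocks_zero₁₂, Matrix.charpoly_fromBlocks_zero₁₂,
      herm_charpoly_smul hA 2, herm_charpoly_smul hA (-1),
      show (0 : Matrix V V ℝ).charpoly = ∏ _i : V, (X - C (0:ℝ)) by
        rw [← Matrix.diagonal_zero, my_charpoly_diagonal]]
    simp only [Multiset.map_add, Multiset.prod_add, Multiset.map_map]
    rw [Finset.prod_eq_multiset_prod, Finset.prod_eq_multiset_prod,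
      Finset.prod_eq_multiset_prod, mul_assoc]
    rfl
  have hroots : Finset.univ.val.map (adjMatrix_isHermitian (splittingGraph 2 G)).eigenvalues
      = (Finset.univ.val.map fun i => 2 * hA.eigenvalues i)
        + (Finset.univ.val.map fun i => -1 * hA.eigenvalues i)
        + (Finset.univ.val.map fun _ : V => (0:ℝ)) := by
    conv_lhs => rw [← Polynomial.roots_multiset_prod_X_sub_C
      (Finset.univ.val.map (adjMatrix_isHermitian (splittingGraph 2 G)).eigenvalues)]
    conv_rhs => rw [← Polynomial.roots_multiset_prod_X_sub_C
      ((Finset.univ.val.map fun i => 2 * hA.eigenvalues i)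
        + (Finset.univ.val.map fun i => -1 * hA.eigenvalues i)
        + (Finset.univ.val.map fun _ : V => (0:ℝ)))]
    rw [← hchar1, ← hchar2, hST, hconj]
  rw [my_sum_abs_eq, hroots]
  simp only [Multiset.map_add, Multiset.sum_add]
  have e1 : ((Finset.univ.val.map fun i : V => 2 * hA.eigenvalues i).map (fun x => |x|)).sum
      = ∑ i, |2 * hA.eigenvalues i| := by
    rw [my_sum_abs_eq]
  have e2 : ((Finset.univ.val.map fun i : V => -1 * hA.eigenvalues i).map (fun x => |x|)).sum
      = ∑ i, |-1 * hA.eigenvalues i| := by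
    rw [my_sum_abs_eq]
  have e3 : ((Finset.univ.val.map fun _ : V => (0:ℝ)).map (fun x => |x|)).sum
      = ∑ _i : V, |(0:ℝ)| := by
    rw [my_sum_abs_eq]
  rw [e1, e2, e3]
  have h2 : ∑ i, |2 * hA.eigenvalues i| = 2 * ∑ i, |hA.eigenvalues i| := by
    rw [Finset.mul_sum]
    congr 1; ext i; rw [abs_mul]; norm_num
  have h3 : ∑ i, |-1 * hA.eigenvalues i| = ∑ i, |hA.eigenvalues i| := by
    congr 1; ext i; rw [abs_mul]; norm_num
  rw [h2, h3, hord]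
  simp
  ring

end Final

/-- If `G` is an orderenergetic graph of order `p`, then the 2-splitting graph
`spl₂(G)` is orderenergetic: it has `3 * p` vertices and energy `3 * p`. -/
theorem splittingGraph_two_orderenergetic [Fintype V] [DecidableEq V]
    (G : SimpleGraph V) (p : ℕ) (hp : Fintype.card V = p)
    (hord : graphEnergy G = p) :
    Fintype.card (V ⊕ (Fin 2 × V)) = 3 * p ∧
      graphEnergy (splittingGraph 2 G) = (3 * p : ℕ) := by
  classical
  refine ⟨?_, ?_⟩
  · simp only [Fintype.card_sum, Fintype.card_prod, Fintype.card_fin, hp]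
    omega
  · unfold graphEnergy at hord ⊢
    exact final_key G p hord
end

section
/- Let G be a non-hyperenergetic graph of order p ≥ 1, i.e., ε(G) ≤ 2(p−1), and let m ≥ 14. Then the Kronecker product K_{1,m} × G is hypoenergetic, i.e., ε(K_{1,m} × G) < p(m+1). -/
open Matrix SimpleGraph Finset

variable {V W : Type*}

open Polynomial
variable {n : Type*} [Fintype n] [DecidableEq n]

lemma myEvalCharpoly (M : Matrix n n ℝ) (x : ℝ) :
    M.charpoly.eval x = (x • (1 : Matrix n n ℝ) - M).det := by
  rw [Matrix.charpoly, ← Polynomial.coe_evalRingHom, RingHom.map_det]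
  congr 1
  ext i j
  by_cases h : i = j <;>
    simp [Matrix.charmatrix_apply, h, Matrix.one_apply, Matrix.diagonal_apply]

lemma myDetAux (U : Matrix n n ℝ) (hU : U ∈ Matrix.unitaryGroup n ℝ) (g : n → ℝ) (x : ℝ) :
    (x • (1 : Matrix n n ℝ) - U * Matrix.diagonal g * star U).det = ∏ i, (x - g i) := by
  have hU1 : U * star U = 1 := (Matrix.mem_unitaryGroup_iff).mp hU
  have h1 : x • (1 : Matrix n n ℝ) - U * Matrix.diagonal g * star U
      = U * (Matrix.diagonal fun i => x - g i) * star U := by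
    have : (Matrix.diagonal fun i => x - g i)
        = x • (1 : Matrix n n ℝ) - Matrix.diagonal g := by
      ext i j
      by_cases h : i = j <;> simp [Matrix.diagonal_apply, Matrix.one_apply, h]
    rw [this, Matrix.mul_sub, Matrix.sub_mul, Matrix.mul_smul, Matrix.mul_one,
      Matrix.smul_mul, hU1]
  rw [h1, Matrix.det_mul, Matrix.det_mul, mul_comm, ← mul_assoc, ← Matrix.det_mul,
    (Matrix.mem_unitaryGroup_iff').mp hU, Matrix.det_one, one_mul, Matrix.det_diagonal]

lemma mySpecA {A : Matrix n n ℝ} (hA : A.IsHermitian) :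
    A = (hA.eigenvectorUnitary : Matrix n n ℝ) * Matrix.diagonal hA.eigenvalues
      * star (hA.eigenvectorUnitary : Matrix n n ℝ) := by
  have := hA.spectral_theorem
  rwa [RCLike.ofReal_real_eq_id, Function.id_comp] at this

lemma myDetSub {A : Matrix n n ℝ} (hA : A.IsHermitian) (x : ℝ) :
    (x • (1 : Matrix n n ℝ) - A).det = ∏ i, (x - hA.eigenvalues i) := by
  conv_lhs => rw [mySpecA hA]
  exact myDetAux _ (hA.eigenvectorUnitary).2 _ x

lemma myDetSubSq {A : Matrix n n ℝ} (hA : A.IsHermitian) (x c : ℝ) :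
    (x • (1 : Matrix n n ℝ) - c • (A * A)).det
      = ∏ i, (x - c * hA.eigenvalues i ^ 2) := by
  have hU2 : star (hA.eigenvectorUnitary : Matrix n n ℝ)
      * (hA.eigenvectorUnitary : Matrix n n ℝ) = 1 :=
    (Matrix.mem_unitaryGroup_iff').mp (hA.eigenvectorUnitary).2
  have hAA : A * A = (hA.eigenvectorUnitary : Matrix n n ℝ)
      * (Matrix.diagonal hA.eigenvalues * Matrix.diagonal hA.eigenvalues)
      * star (hA.eigenvectorUnitary : Matrix n n ℝ) := by
    conv_lhs => rw [mySpecA hA]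
    simp only [Matrix.mul_assoc]
    rw [← Matrix.mul_assoc (star (hA.eigenvectorUnitary : Matrix n n ℝ))
      (hA.eigenvectorUnitary : Matrix n n ℝ), hU2, Matrix.one_mul]
  have h2 : c • (A * A) = (hA.eigenvectorUnitary : Matrix n n ℝ)
      * Matrix.diagonal (fun i => c * hA.eigenvalues i ^ 2)
      * star (hA.eigenvectorUnitary : Matrix n n ℝ) := by
    rw [hAA, Matrix.diagonal_mul_diagonal, ← Matrix.smul_mul, ← Matrix.mul_smul]
    congr 2
    ext i j
    by_cases h : i = j <;> simp [Matrix.diagonal_apply, h, pow_two, mul_comm]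
  rw [h2]
  exact myDetAux _ (hA.eigenvectorUnitary).2 _ x

lemma myCharpolyHerm {A : Matrix n n ℝ} (hA : A.IsHermitian) :
    A.charpoly = ∏ i, (X - C (hA.eigenvalues i)) := by
  apply Polynomial.funext
  intro x
  rw [myEvalCharpoly, myDetSub hA, Polynomial.eval_prod]
  simp

lemma myRootsHerm {A : Matrix n n ℝ} (hA : A.IsHermitian) :
    A.charpoly.roots = Finset.univ.val.map hA.eigenvalues := by
  rw [myCharpolyHerm hA]
  have : (∏ i, (X - C (hA.eigenvalues i)))
      = ((Finset.univ.val.map hA.eigenvalues).map fun a => X - C a).prod := by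
    rw [Multiset.map_map]
    rfl
  rw [this, Polynomial.roots_multiset_prod_X_sub_C]
section Tensor
open Polynomial
variable {V : Type*} [Fintype V] [DecidableEq V]

/-- equiv Fin 1 × V ≃ V -/
def myE1 (V : Type*) : Fin 1 × V ≃ V where
  toFun := Prod.snd
  invFun v := (0, v)
  left_inv p := Prod.ext (Subsingleton.elim _ _) rfl
  right_inv v := rfl

lemma myDetTensor (G : SimpleGraph V) [DecidableRel G.Adj] (m : ℕ) (hm : 1 ≤ m)
    [inst2 : DecidableRel (tensorGraph (completeBipartiteGraph (Fin 1) (Fin m)) G).Adj]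
    (x : ℝ) (hx : x ≠ 0) :
    (x • (1 : Matrix ((Fin 1 ⊕ Fin m) × V) ((Fin 1 ⊕ Fin m) × V) ℝ)
        - (tensorGraph (completeBipartiteGraph (Fin 1) (Fin m)) G).adjMatrix ℝ).det
      = x ^ ((m - 1) * Fintype.card V) *
        ∏ j, ((x - Real.sqrt m * (adjMatrix_isHermitian G).eigenvalues j)
          * (x + Real.sqrt m * (adjMatrix_isHermitian G).eigenvalues j)) := by
  set A2 := G.adjMatrix ℝ with hA2def
  set N := (tensorGraph (completeBipartiteGraph (Fin 1) (Fin m)) G).adjMatrix ℝ with hNdef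
  set ev := (adjMatrix_isHermitian G).eigenvalues with hevdef
  set e := Equiv.sumProdDistrib (Fin 1) (Fin m) V with he
  set Bm : Matrix (Fin 1 × V) (Fin m × V) ℝ := fun a b => -(A2 a.2 b.2) with hBm
  set Cm : Matrix (Fin m × V) (Fin 1 × V) ℝ := fun a b => -(A2 a.2 b.2) with hCm
  have hdet1 : (x • (1 : Matrix ((Fin 1 ⊕ Fin m) × V) ((Fin 1 ⊕ Fin m) × V) ℝ) - N).det
      = ((x • 1 - N).submatrix e.symm e.symm).det :=
    (Matrix.det_submatrix_equiv_self e.symm _).symm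
  have hblock : (x • (1 : Matrix ((Fin 1 ⊕ Fin m) × V) ((Fin 1 ⊕ Fin m) × V) ℝ)
        - N).submatrix e.symm e.symm
      = Matrix.fromBlocks (x • 1) Bm Cm (x • 1) := by
    ext i j
    rcases i with ⟨a, v⟩ | ⟨i, w⟩ <;> rcases j with ⟨a', v'⟩ | ⟨i', w'⟩ <;>
      (simp only [hNdef, Matrix.sub_apply, Matrix.submatrix_apply, adjMatrix_apply,
        Matrix.fromBlocks_apply₁₁, Matrix.fromBlocks_apply₁₂, Matrix.fromBlocks_apply₂₁,
        Matrix.fromBlocks_apply₂₂]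
       simp [he, hBm, hCm, hNdef, hA2def, tensorGraph, completeBipartiteGraph,
        Matrix.one_apply, Prod.ext_iff])
  letI : Invertible (x • (1 : Matrix (Fin m × V) (Fin m × V) ℝ)) :=
    ⟨x⁻¹ • 1, by rw [Matrix.smul_mul, Matrix.one_mul, smul_smul, inv_mul_cancel₀ hx, one_smul],
      by rw [Matrix.smul_mul, Matrix.one_mul, smul_smul, mul_inv_cancel₀ hx, one_smul]⟩
  rw [hdet1, hblock, Matrix.det_fromBlocks₂₂]
  have hinv : ⅟(x • (1 : Matrix (Fin m × V) (Fin m × V) ℝ)) = x⁻¹ • 1 := rfl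
  have hBC : Bm * ⅟(x • (1 : Matrix (Fin m × V) (Fin m × V) ℝ)) * Cm
      = ((m : ℝ) * x⁻¹) • ((A2 * A2).submatrix Prod.snd Prod.snd) := by
    rw [hinv, Matrix.mul_smul, Matrix.mul_one, Matrix.smul_mul]
    rw [show ((m : ℝ) * x⁻¹) = x⁻¹ * m by ring, ← smul_smul]
    congr 1
    ext ⟨a, v⟩ ⟨a', v'⟩
    simp only [Matrix.mul_apply, Matrix.smul_apply]
    simp [Matrix.mul_apply, hBm, hCm, Fintype.sum_prod_type, Finset.mul_sum, Matrix.smul_apply]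
  rw [hBC]
  have hre : x • (1 : Matrix (Fin 1 × V) (Fin 1 × V) ℝ)
        - ((m : ℝ) * x⁻¹) • ((A2 * A2).submatrix Prod.snd Prod.snd)
      = (x • (1 : Matrix V V ℝ) - ((m : ℝ) * x⁻¹) • (A2 * A2)).submatrix (myE1 V) (myE1 V) := by
    ext ⟨a, v⟩ ⟨a', v'⟩
    obtain rfl : a = a' := Subsingleton.elim _ _
    simp [myE1, Matrix.one_apply, Prod.ext_iff]
  rw [hre, Matrix.det_submatrix_equiv_self (myE1 V),
    myDetSubSq (adjMatrix_isHermitian G) x ((m : ℝ) * x⁻¹)]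
  rw [Matrix.det_smul, Matrix.det_one, mul_one]
  have hcard : Fintype.card (Fin m × V) = (m - 1) * Fintype.card V + Fintype.card V := by
    obtain ⟨k, rfl⟩ : ∃ k, m = k + 1 := ⟨m - 1, by omega⟩
    simp [Fintype.card_prod, add_mul]
  rw [hcard, pow_add, mul_assoc]
  congr 1
  rw [show (x ^ Fintype.card V) = ∏ _j : V, x by
    rw [Finset.prod_const, Finset.card_univ]]
  rw [← Finset.prod_mul_distrib]
  apply Finset.prod_congr rfl
  intro j _
  have hs : Real.sqrt m * Real.sqrt m = (m : ℝ) :=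
    Real.mul_self_sqrt (Nat.cast_nonneg m)
  have hxx : x * x⁻¹ = 1 := mul_inv_cancel₀ hx
  linear_combination (ev j ^ 2) * hs - ((m : ℝ) * ev j ^ 2) * hxx

end Tensor

section Energy
open Polynomial
variable {V : Type*} [Fintype V] [DecidableEq V]

lemma myEnergyTensor (G : SimpleGraph V) [DecidableRel G.Adj] (m : ℕ) (hm : 1 ≤ m)
    [inst2 : DecidableRel (tensorGraph (completeBipartiteGraph (Fin 1) (Fin m)) G).Adj] :
    ∑ i, |(adjMatrix_isHermitian
        (tensorGraph (completeBipartiteGraph (Fin 1) (Fin m)) G)).eigenvalues i|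
      = 2 * Real.sqrt m * ∑ j, |(adjMatrix_isHermitian G).eigenvalues j| := by
  set ev := (adjMatrix_isHermitian G).eigenvalues with hev
  set evN := (adjMatrix_isHermitian
    (tensorGraph (completeBipartiteGraph (Fin 1) (Fin m)) G)).eigenvalues with hevN
  set T : Multiset ℝ := Multiset.replicate ((m - 1) * Fintype.card V) 0
    + Multiset.map (fun j => Real.sqrt m * ev j) Finset.univ.val
    + Multiset.map (fun j => -(Real.sqrt m * ev j)) Finset.univ.val with hT
  have hchar : ((tensorGraph (completeBipartiteGraph (Fin 1) (Fin m)) G).adjMatrix ℝ).charpoly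
      = (T.map fun a => X - C a).prod := by
    apply Polynomial.eq_of_infinite_eval_eq
    apply Set.Infinite.mono _ ((Set.finite_singleton (0 : ℝ)).infinite_compl)
    intro x hx
    have hx0 : x ≠ 0 := hx
    show eval x _ = eval x _
    rw [myEvalCharpoly, myDetTensor G m hm x hx0, Polynomial.eval_multiset_prod,
      Multiset.map_map]
    have hg : ((fun p => eval x p) ∘ fun a => X - C a) = fun a => x - a := by
      funext a; simp
    rw [hg, hT]
    simp only [Multiset.map_add, Multiset.prod_add, Multiset.map_replicate,
      Multiset.prod_replicate, Multiset.map_map]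
    have h1 : ((Multiset.map ((fun a => x - a) ∘ fun j => Real.sqrt m * ev j)
        Finset.univ.val)).prod = ∏ j, (x - Real.sqrt m * ev j) := rfl
    have h2 : ((Multiset.map ((fun a => x - a) ∘ fun j => -(Real.sqrt m * ev j))
        Finset.univ.val)).prod = ∏ j, (x + Real.sqrt m * ev j) := by
      rw [show ((fun a => x - a) ∘ fun j => -(Real.sqrt m * ev j))
        = fun j => x + Real.sqrt m * ev j by funext j; simp [sub_neg_eq_add]]
      rfl
    rw [h1, h2, sub_zero, mul_assoc, ← Finset.prod_mul_distrib]
  have hroots : Multiset.map evN Finset.univ.val = T := by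
    rw [hevN, ← myRootsHerm, hchar, Polynomial.roots_multiset_prod_X_sub_C]
  have hsum : ∑ i, |evN i| = ((Multiset.map evN Finset.univ.val).map fun a => |a|).sum := by
    rw [Multiset.map_map]; rfl
  rw [hsum, hroots, hT]
  simp only [Multiset.map_add, Multiset.sum_add, Multiset.map_replicate,
    Multiset.sum_replicate, Multiset.map_map, abs_zero, smul_zero]
  have h3 : ((Multiset.map ((fun a => |a|) ∘ fun j => Real.sqrt m * ev j)
      Finset.univ.val)).sum = ∑ j, Real.sqrt m * |ev j| := by
    rw [show ((fun a => |a|) ∘ fun j => Real.sqrt m * ev j)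
      = fun j => Real.sqrt m * |ev j| by
        funext j; rw [Function.comp_apply, abs_mul, abs_of_nonneg (Real.sqrt_nonneg _)]]
    rfl
  have h4 : ((Multiset.map ((fun a => |a|) ∘ fun j => -(Real.sqrt m * ev j))
      Finset.univ.val)).sum = ∑ j, Real.sqrt m * |ev j| := by
    rw [show ((fun a => |a|) ∘ fun j => -(Real.sqrt m * ev j))
      = fun j => Real.sqrt m * |ev j| by
        funext j
        rw [Function.comp_apply, abs_neg, abs_mul, abs_of_nonneg (Real.sqrt_nonneg _)]]
    rfl
  rw [h3, h4, ← Finset.mul_sum]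
  ring

end Energy

section FinalAux
variable {V : Type*} [Fintype V] [DecidableEq V]

lemma myGraphEnergyEq (G : SimpleGraph V) [inst : DecidableRel G.Adj] :
    graphEnergy G = ∑ i, |(adjMatrix_isHermitian G).eigenvalues i| := by
  unfold graphEnergy
  congr!

lemma myGraphEnergyNonneg (G : SimpleGraph V) : 0 ≤ graphEnergy G := by
  classical
  rw [myGraphEnergyEq]
  exact Finset.sum_nonneg fun i _ => abs_nonneg _

end FinalAux

/-- If `G` is a non-hyperenergetic graph of order `p ≥ 1` (i.e. `ε(G) ≤ 2(p-1)`)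
and `m ≥ 14`, then the Kronecker product `K_{1,m} × G` is hypoenergetic: its
energy is less than its order `p * (m + 1)`. -/
theorem tensor_star_nonhyperenergetic_hypoenergetic [Fintype V] [DecidableEq V]
    (G : SimpleGraph V) (p m : ℕ) (hp : Fintype.card V = p) (hp1 : 1 ≤ p)
    (hm : 14 ≤ m) (hG : graphEnergy G ≤ 2 * ((p : ℝ) - 1)) :
    graphEnergy (tensorGraph (completeBipartiteGraph (Fin 1) (Fin m)) G)
      < (p : ℝ) * (m + 1) := by
  classical
  have hEnn : 0 ≤ graphEnergy G := myGraphEnergyNonneg G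
  rw [myGraphEnergyEq] at hG ⊢
  rw [myGraphEnergyEq] at hEnn
  rw [myEnergyTensor G m (by omega)]
  have hsm : (0 : ℝ) ≤ Real.sqrt m := Real.sqrt_nonneg _
  have hsml : Real.sqrt m ≤ ((m : ℝ) + 1) / 4 := by
    rw [show ((m : ℝ) + 1) / 4 = Real.sqrt ((((m : ℝ) + 1) / 4) ^ 2) by
      rw [Real.sqrt_sq (by positivity)]]
    apply Real.sqrt_le_sqrt
    have : (14 : ℝ) ≤ (m : ℝ) := by exact_mod_cast hm
    nlinarith
  have hp1' : (1 : ℝ) ≤ (p : ℝ) := by exact_mod_cast hp1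
  have hm0 : (0 : ℝ) < (m : ℝ) + 1 := by positivity
  set E := ∑ j, |(adjMatrix_isHermitian G).eigenvalues j| with hE
  calc 2 * Real.sqrt m * E ≤ 2 * Real.sqrt m * (2 * ((p : ℝ) - 1)) := by
        apply mul_le_mul_of_nonneg_left hG (by positivity)
    _ = 4 * Real.sqrt m * ((p : ℝ) - 1) := by ring
    _ ≤ 4 * (((m : ℝ) + 1) / 4) * ((p : ℝ) - 1) := by
        apply mul_le_mul_of_nonneg_right _ (by linarith)
        linarith
    _ = ((m : ℝ) + 1) * ((p : ℝ) - 1) := by ring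
    _ < (p : ℝ) * ((m : ℝ) + 1) := by nlinarith
end
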